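/- With F(x,α) = −2x·ψ(α) + 2x³, H(α) = 6α·(1/ψ'(α) + 2ψ(α)), G(x,α) = 12x²α − F² − H(α), and ψ solving the ODE of Lemma 1, the identity ∂G/∂x + F·∂G/∂α = 2G·∂F/∂α holds wherever these functions are defined. -/

import Mathlib

/-- `ψ` is an analytic solution near `0` of the singular Cauchy problem
`3x ψ'' + 6x (ψ')³ − 4ψ (ψ')² − 3ψ' = 0`, `ψ(0) = 1`, `ψ'(0) = −3/4`. -/
def GavrilovODE (ψ : ℝ → ℝ) : Prop :=
  AnalyticAt ℝ ψ 0 ∧ ψ 0 = 1 ∧ deriv ψ 0 = -(3/4) ∧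
    ∀ᶠ x in nhds (0:ℝ),
      3 * x * deriv (deriv ψ) x + 6 * x * (deriv ψ x)^3
        - 4 * ψ x * (deriv ψ x)^2 - 3 * deriv ψ x = 0

/-- Lemma 2, part (2a): `∂G/∂x + F ∂G/∂α = 2G ∂F/∂α`. -/
theorem gavrilov_FG_identity (ψ : ℝ → ℝ) (h : GavrilovODE ψ)
    (F : ℝ → ℝ → ℝ) (hF : ∀ x α, F x α = -2*x*ψ α + 2*x^3)
    (H : ℝ → ℝ) (hH : ∀ α, H α = 6*α*(1/deriv ψ α + 2*ψ α))
    (G : ℝ → ℝ → ℝ) (hG : ∀ x α, G x α = 12*x^2*α - (F x α)^2 - H α) :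
    ∀ x : ℝ, ∀ᶠ α in nhds (0:ℝ),
      deriv (fun x' => G x' α) x + F x α * deriv (fun α' => G x α') α
        = 2 * G x α * deriv (fun α' => F x α') α := by
  obtain ⟨hAn, hψ0, hψ'0, hode⟩ := h
  intro x
  obtain ⟨s, hs_mem, hs⟩ : ∃ s ∈ nhds (0:ℝ), AnalyticOnNhd ℝ ψ s := by
    rcases hAn.eventually_analyticAt.exists_mem with ⟨s, hs1, hs2⟩
    exact ⟨s, hs1, fun y hy => hs2 y hy⟩
  have hderiv : AnalyticOnNhd ℝ (deriv ψ) s := hs.deriv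
  have hA' : AnalyticAt ℝ (deriv ψ) 0 := hderiv 0 (mem_of_mem_nhds hs_mem)
  have hAev : ∀ᶠ α in nhds (0:ℝ), AnalyticAt ℝ ψ α := hAn.eventually_analyticAt
  have hA'ev : ∀ᶠ α in nhds (0:ℝ), AnalyticAt ℝ (deriv ψ) α := by
    filter_upwards [hs_mem] with α hα
    exact hderiv α hα
  have hnev : ∀ᶠ α in nhds (0:ℝ), deriv ψ α ≠ 0 := by
    have hc : ContinuousAt (deriv ψ) 0 := hA'.continuousAt
    have h0 : deriv ψ 0 ≠ (0:ℝ) := by rw [hψ'0]; norm_num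
    exact hc.eventually_ne h0
  filter_upwards [hAev, hA'ev, hnev, hode] with α hψa hψ'a hne hodeα
  have hψd : HasDerivAt ψ (deriv ψ α) α := hψa.differentiableAt.hasDerivAt
  have hψ'd : HasDerivAt (deriv ψ) (deriv (deriv ψ) α) α := hψ'a.differentiableAt.hasDerivAt
  set p := ψ α with hp
  set q := deriv ψ α with hq
  set r := deriv (deriv ψ) α with hr
  -- derivative in x
  have hGx : HasDerivAt (fun x' => 12*x'^2*α - (-2*x'*ψ α + 2*x'^3)^2 - H α)
      (24*x*α - 2*(-2*x*p + 2*x^3)*(-2*p + 6*x^2)) x := by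
    have h1 : HasDerivAt (fun x' : ℝ => -2*x'*ψ α + 2*x'^3) (-2*p + 6*x^2) x := by
      have := (((hasDerivAt_id x).const_mul (-2:ℝ)).mul_const (ψ α)).add
        ((hasDerivAt_pow 3 x).const_mul (2:ℝ))
      refine this.congr_deriv ?_
      push_cast; ring
    have h2 := (((hasDerivAt_pow 2 x).const_mul (12:ℝ)).mul_const α).sub (h1.pow 2)
    have h3 := h2.sub_const (H α)
    refine h3.congr_deriv ?_
    push_cast; ring
  -- derivative in α
  have hB1 : HasDerivAt (fun α' : ℝ => -2*x*ψ α' + 2*x^3) (-2*x*q) α := by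
    have := (hψd.const_mul (-2*x)).add_const (2*x^3)
    convert this using 1
  have hGα : HasDerivAt (fun α' => 12*x^2*α' - (-2*x*ψ α' + 2*x^3)^2 -
      6*α'*((deriv ψ α')⁻¹ + 2*ψ α'))
      (12*x^2 - 2*(-2*x*p + 2*x^3)*(-2*x*q)
        - (6*(q⁻¹ + 2*p) + 6*α*(-r/q^2 + 2*q))) α := by
    have hHd : HasDerivAt (fun α' : ℝ => 6*α'*((deriv ψ α')⁻¹ + 2*ψ α'))
        (6*(q⁻¹ + 2*p) + 6*α*(-r/q^2 + 2*q)) α := by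
      have := ((hasDerivAt_id α).const_mul (6:ℝ)).mul
        ((hψ'd.inv hne).add (hψd.const_mul (2:ℝ)))
      refine this.congr_deriv ?_
      simp only [id_eq, Pi.add_apply, Pi.inv_apply, ← hq, ← hp]; ring
    have h2 := (((hasDerivAt_id α).const_mul (12*x^2)).sub (hB1.pow 2)).sub hHd
    refine h2.congr_deriv ?_
    push_cast; ring
  have e1 : deriv (fun x' => G x' α) x
      = 24*x*α - 2*(-2*x*p + 2*x^3)*(-2*p + 6*x^2) := by
    have : (fun x' => G x' α) = fun x' => 12*x'^2*α - (-2*x'*ψ α + 2*x'^3)^2 - H α := by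
      funext x'; rw [hG, hF]
    rw [this]; exact hGx.deriv
  have e2 : deriv (fun α' => G x α') α
      = 12*x^2 - 2*(-2*x*p + 2*x^3)*(-2*x*q)
        - (6*(q⁻¹ + 2*p) + 6*α*(-r/q^2 + 2*q)) := by
    have : (fun α' => G x α') = fun α' => 12*x^2*α' - (-2*x*ψ α' + 2*x^3)^2 -
        6*α'*((deriv ψ α')⁻¹ + 2*ψ α') := by
      funext α'; rw [hG, hF, hH, one_div]
    rw [this]; exact hGα.deriv
  have e3 : deriv (fun α' => F x α') α = -2*x*q := by
    have : (fun α' => F x α') = fun α' : ℝ => -2*x*ψ α' + 2*x^3 := by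
      funext α'; rw [hF]
    rw [this]; exact hB1.deriv
  rw [e1, e2, e3, hG, hF, hH]
  simp only [← hp, ← hq, ← hr]
  field_simp
  linear_combination (4*x*(x^2-p)) * hodeα
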